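/- Let (Ω, 𝓕, ℙ) be a probability space, let 𝓖 ⊆ 𝓕 be a sub-σ-algebra, let F be a square-integrable real random variable with G₀ := E[F | 𝓖], and let G be a 𝓖-measurable square-integrable real random variable with E[G²] ≤ K for some real K ≥ 0. Then |Var(F) − Var(G) − Var(F − G)| ≤ 2·√(E[(G₀ − G)²])·√K. -/

import Mathlib

open MeasureTheory ProbabilityTheory

/-- Product of two L² functions is integrable. -/
lemma memLp_two_integrable_mul {Ω : Type*} {mΩ : MeasurableSpace Ω} {P : Measure Ω}
    {f g : Ω → ℝ} (hf : MemLp f 2 P) (hg : MemLp g 2 P) :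
    Integrable (fun ω => f ω * g ω) P := by
  have hbound : Integrable (fun ω => (f ω ^ 2 + g ω ^ 2) / 2) P :=
    (hf.integrable_sq.add hg.integrable_sq).div_const 2
  refine hbound.mono' (hf.1.mul hg.1) ?_
  filter_upwards with ω
  rw [Real.norm_eq_abs, abs_mul]
  nlinarith [sq_nonneg (|f ω| - |g ω|), abs_nonneg (f ω), abs_nonneg (g ω),
    sq_abs (f ω), sq_abs (g ω)]

/-- Cauchy–Schwarz inequality for integrals of L² functions. -/
lemma abs_integral_mul_le_sqrt {Ω : Type*} {mΩ : MeasurableSpace Ω} {P : Measure Ω}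
    {f g : Ω → ℝ} (hf : MemLp f 2 P) (hg : MemLp g 2 P) :
    |∫ ω, f ω * g ω ∂P| ≤ Real.sqrt (∫ ω, f ω ^ 2 ∂P) * Real.sqrt (∫ ω, g ω ^ 2 ∂P) := by
  have hpq : Real.HolderConjugate 2 2 := Real.holderConjugate_iff.mpr ⟨one_lt_two, by norm_num⟩
  have h2 : ENNReal.ofReal (2 : ℝ) = 2 := by norm_num
  have hf' : MemLp f (ENNReal.ofReal (2 : ℝ)) P := h2 ▸ hf
  have hg' : MemLp g (ENNReal.ofReal (2 : ℝ)) P := h2 ▸ hg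
  have hH := integral_mul_norm_le_Lp_mul_Lq hpq hf' hg'
  have hsq : ∀ x : ℝ, ‖x‖ ^ (2 : ℝ) = x ^ 2 := fun x => by
    rw [show (2 : ℝ) = ((2 : ℕ) : ℝ) by norm_num, Real.rpow_natCast, Real.norm_eq_abs, sq_abs]
  simp_rw [hsq] at hH
  have h0 : |∫ ω, f ω * g ω ∂P| ≤ ∫ ω, ‖f ω * g ω‖ ∂P := by
    simpa [Real.norm_eq_abs] using norm_integral_le_integral_norm (μ := P) (fun ω => f ω * g ω)
  calc |∫ ω, f ω * g ω ∂P| ≤ ∫ ω, ‖f ω * g ω‖ ∂P := h0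
    _ = ∫ ω, ‖f ω‖ * ‖g ω‖ ∂P := by simp [norm_mul]
    _ ≤ (∫ ω, f ω ^ 2 ∂P) ^ (1 / (2 : ℝ)) * (∫ ω, g ω ^ 2 ∂P) ^ (1 / (2 : ℝ)) := hH
    _ = Real.sqrt (∫ ω, f ω ^ 2 ∂P) * Real.sqrt (∫ ω, g ω ^ 2 ∂P) := by
      rw [Real.sqrt_eq_rpow, Real.sqrt_eq_rpow]

/-- The conditional expectation of an L² function is in L². -/
lemma memLp_two_condexp {Ω : Type*} {mΩ : MeasurableSpace Ω} {P : Measure Ω}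
    [IsProbabilityMeasure P] (m : MeasurableSpace Ω) (hm : m ≤ mΩ)
    {F : Ω → ℝ} (hF : MemLp F 2 P) : MemLp (P[F|m]) 2 P := by
  haveI : SigmaFinite (P.trim hm) := inferInstance
  set fL : Lp ℝ 2 P := hF.toLp F with hfL
  set H : Ω → ℝ := ((condExpL2 ℝ ℝ hm fL : Lp ℝ 2 P) : Ω → ℝ) with hH
  have hHmem : MemLp H 2 P := Lp.memLp _
  have hfLF : (fL : Ω → ℝ) =ᵐ[P] F := hF.coeFn_toLp
  have hae : H =ᵐ[P] P[F|m] := by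
    refine ae_eq_condExp_of_forall_setIntegral_eq hm (hF.integrable one_le_two)
      (fun s hs hμs => ?_) (fun s hs hμs => ?_) ?_
    · exact (hHmem.integrable one_le_two).restrict
    · rw [integral_condExpL2_eq hm fL hs hμs.ne]
      exact integral_congr_ae (ae_restrict_of_ae hfLF)
    · exact aestronglyMeasurable_condExpL2 hm fL
  exact hHmem.ae_eq hae

/-- **Perturbation of the Pythagorean variance decomposition.**
Let `F` be square-integrable with ideal prediction `G₀ = E[F | m]`, and let `G` be an
`m`-measurable square-integrable prediction model with second moment bounded by `K`. Then
`|Var(F) − Var(G) − Var(F − G)| ≤ 2 √(E[(G₀ − G)²]) √K`, where `E[(G₀ − G)²]` is the total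
`L²` training error. -/
theorem variance_decomposition_perturbation
    {Ω : Type*} {mΩ : MeasurableSpace Ω} {P : Measure Ω} [IsProbabilityMeasure P]
    (m : MeasurableSpace Ω) (hm : m ≤ mΩ)
    (F G : Ω → ℝ) (hF : MemLp F 2 P) (hG : MemLp G 2 P)
    (hGmeas : StronglyMeasurable[m] G)
    (K : ℝ) (hK0 : 0 ≤ K) (hK : ∫ ω, G ω ^ 2 ∂P ≤ K) :
    |variance F P - variance G P - variance (fun ω => F ω - G ω) P|
      ≤ 2 * Real.sqrt (∫ ω, ((P[F|m]) ω - G ω) ^ 2 ∂P) * Real.sqrt K := by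
  haveI : SigmaFinite (P.trim hm) := inferInstance
  set G0 : Ω → ℝ := P[F|m] with hG0def
  have hG0 : MemLp G0 2 P := memLp_two_condexp m hm hF
  have iF : Integrable F P := hF.integrable one_le_two
  have iG : Integrable G P := hG.integrable one_le_two
  have iG0 : Integrable G0 P := hG0.integrable one_le_two
  have iF2 : Integrable (fun ω => F ω ^ 2) P := hF.integrable_sq
  have iG2 : Integrable (fun ω => G ω ^ 2) P := hG.integrable_sq
  have iFG : Integrable (fun ω => F ω * G ω) P := memLp_two_integrable_mul hF hG
  have iG0G : Integrable (fun ω => G0 ω * G ω) P := memLp_two_integrable_mul hG0 hG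
  set a : ℝ := ∫ ω, F ω ∂P with ha
  set b : ℝ := ∫ ω, G ω ∂P with hb
  have ha0 : ∫ ω, G0 ω ∂P = a := integral_condExp hm
  -- key orthogonality: ∫ F G = ∫ G0 G
  have hmul : ∫ ω, F ω * G ω ∂P = ∫ ω, G0 ω * G ω ∂P := by
    have h1 : P[(fun ω => G ω * F ω)|m] =ᵐ[P] fun ω => G ω * G0 ω := by
      have h := condExp_mul_of_stronglyMeasurable_left hGmeas
        (show Integrable (G * F) P by
          exact memLp_two_integrable_mul hG hF) iF
      filter_upwards [h] with ω hω
      exact hω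
    calc ∫ ω, F ω * G ω ∂P = ∫ ω, G ω * F ω ∂P := by simp_rw [mul_comm]
      _ = ∫ ω, (P[(fun ω => G ω * F ω)|m]) ω ∂P := (integral_condExp hm).symm
      _ = ∫ ω, G ω * G0 ω ∂P := integral_congr_ae h1
      _ = ∫ ω, G0 ω * G ω ∂P := by simp_rw [mul_comm]
  -- variances via second moments
  have e1 : variance F P = (∫ ω, F ω ^ 2 ∂P) - a ^ 2 := variance_eq_sub hF
  have e2 : variance G P = (∫ ω, G ω ^ 2 ∂P) - b ^ 2 := variance_eq_sub hG
  have e3 : variance (fun ω => F ω - G ω) P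
      = (∫ ω, (F ω - G ω) ^ 2 ∂P) - (a - b) ^ 2 := by
    have h := variance_eq_sub (hF.sub hG)
    simp only [Pi.sub_apply, Pi.pow_apply] at h
    rw [show (fun ω => F ω - G ω) = F - G from rfl, variance_eq_sub (hF.sub hG)]
    simp only [Pi.sub_apply, Pi.pow_apply]
    rw [integral_sub iF iG]
  have e4 : ∫ ω, (F ω - G ω) ^ 2 ∂P
      = (∫ ω, F ω ^ 2 ∂P) - 2 * (∫ ω, F ω * G ω ∂P) + ∫ ω, G ω ^ 2 ∂P := by
    have hexp : ∀ ω, (F ω - G ω) ^ 2 = F ω ^ 2 - 2 * (F ω * G ω) + G ω ^ 2 := fun ω => by ring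
    simp_rw [hexp]
    have iA : Integrable (fun ω => F ω ^ 2 - 2 * (F ω * G ω)) P := iF2.sub (iFG.const_mul 2)
    rw [integral_add iA iG2, integral_sub iF2 (iFG.const_mul 2), integral_const_mul]
  -- expand the centered cross integral
  have e5 : ∫ ω, (G0 ω - G ω) * (G ω - b) ∂P
      = (∫ ω, G0 ω * G ω ∂P) - b * a - (∫ ω, G ω ^ 2 ∂P) + b * b := by
    have hexp : ∀ ω, (G0 ω - G ω) * (G ω - b)
        = G0 ω * G ω - b * G0 ω - G ω ^ 2 + b * G ω := fun ω => by ring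
    simp_rw [hexp]
    have iA : Integrable (fun ω => G0 ω * G ω - b * G0 ω) P := iG0G.sub (iG0.const_mul b)
    have iB : Integrable (fun ω => G0 ω * G ω - b * G0 ω - G ω ^ 2) P := iA.sub iG2
    rw [integral_add iB (iG.const_mul b), integral_sub iA iG2,
      integral_sub iG0G (iG0.const_mul b), integral_const_mul, integral_const_mul, ha0, ← hb]
  -- the key identity
  have key : variance F P - variance G P - variance (fun ω => F ω - G ω) P
      = 2 * ∫ ω, (G0 ω - G ω) * (G ω - b) ∂P := by
    rw [e1, e2, e3, e4, e5, hmul]; ring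
  -- second moment of centered G is at most K
  have e6 : ∫ ω, (G ω - b) ^ 2 ∂P = (∫ ω, G ω ^ 2 ∂P) - b ^ 2 := by
    have hexp : ∀ ω, (G ω - b) ^ 2 = G ω ^ 2 - 2 * b * G ω + b ^ 2 := fun ω => by ring
    simp_rw [hexp]
    have iA : Integrable (fun ω => G ω ^ 2 - 2 * b * G ω) P := iG2.sub (iG.const_mul (2 * b))
    rw [integral_add iA (integrable_const _),
      integral_sub iG2 (iG.const_mul (2 * b)), integral_const_mul, integral_const, ← hb]
    simp only [probReal_univ, measure_univ, ENNReal.toReal_one, one_smul, smul_eq_mul]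
    ring
  have hGb : MemLp (fun ω => G ω - b) 2 P := hG.sub (memLp_const b)
  have hcs := abs_integral_mul_le_sqrt (hG0.sub hG) hGb
  have hle2 : Real.sqrt (∫ ω, (G ω - b) ^ 2 ∂P) ≤ Real.sqrt K := by
    apply Real.sqrt_le_sqrt
    rw [e6]
    nlinarith [sq_nonneg b]
  rw [key, abs_mul, abs_two]
  have hnn : (0 : ℝ) ≤ Real.sqrt (∫ ω, (G0 ω - G ω) ^ 2 ∂P) := Real.sqrt_nonneg _
  calc 2 * |∫ ω, (G0 ω - G ω) * (G ω - b) ∂P|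
      ≤ 2 * (Real.sqrt (∫ ω, (G0 ω - G ω) ^ 2 ∂P) * Real.sqrt (∫ ω, (G ω - b) ^ 2 ∂P)) := by
        have hcs' := hcs
        simp only [Pi.sub_apply] at hcs'
        linarith
    _ ≤ 2 * (Real.sqrt (∫ ω, (G0 ω - G ω) ^ 2 ∂P) * Real.sqrt K) := by
        have := mul_le_mul_of_nonneg_left hle2 hnn
        linarith
    _ = 2 * Real.sqrt (∫ ω, (G0 ω - G ω) ^ 2 ∂P) * Real.sqrt K := by ring
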